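/- arXiv:2010.04345 — 5 statements merged into one kernel-verified Lean document; each statement's English description precedes it below -/
import Mathlib

section
/- For any complex number x with positive real part, |x/|x| - 1| ≤ |Im(x)/Re(x)|. -/
theorem stmt_0 (x : ℂ) (hx : 0 < x.re) :
    ‖x / (‖x‖ : ℂ) - 1‖ ≤ |x.im / x.re| := by
  have hx0 : x ≠ 0 := by
    intro h; simp [h] at hx
  set r := ‖x‖ with hr
  have hr0 : 0 < r := norm_pos_iff.mpr hx0
  have hle : x.re ≤ r := Complex.re_le_norm x
  have hsq : r ^ 2 = x.re ^ 2 + x.im ^ 2 := by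
    rw [hr, Complex.sq_norm, Complex.normSq_apply]; ring
  rw [← Real.sqrt_sq (abs_nonneg (x.im / x.re)), Complex.norm_def]
  apply Real.sqrt_le_sqrt
  have h1 : Complex.normSq (x / (r : ℂ) - 1) = (x.re / r - 1) ^ 2 + (x.im / r) ^ 2 := by
    simp [Complex.normSq_apply, Complex.div_ofReal_re, Complex.div_ofReal_im]
    ring
  rw [h1, sq_abs]
  have key : 2 * x.re ^ 2 * (r - x.re) ≤ x.im ^ 2 * r := by
    have hb : x.im ^ 2 = (r - x.re) * (r + x.re) := by nlinarith
    nlinarith [mul_nonneg (mul_nonneg (sub_nonneg.mpr hle) (sub_nonneg.mpr hle)) (by linarith : (0:ℝ) ≤ r + 2 * x.re)]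
  have h2 : (x.re / r - 1) ^ 2 = (x.re - r) ^ 2 / r ^ 2 := by
    field_simp
  rw [h2, div_pow, div_pow]
  rw [← add_div, div_le_div_iff₀ (by positivity) (by positivity)]
  nlinarith [mul_le_mul_of_nonneg_left key hr0.le, mul_pos hr0 hr0, mul_pos hx hx]
end

section
/- For any two vectors z, z* ∈ ℂⁿ with unit-modulus entries, the loss ℓ(z, z*) = min_{|a|=1} ∑_j |z_j a - z*_j|² and the Frobenius distance of rank-one matrices satisfy the identity ‖z z^H - z* (z*)^H‖_F² = ℓ(z, z*) · (2n - ℓ(z, z*)/2). -/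
open Finset

/-- The phase synchronization loss `ℓ(z, z*) = min_{|a|=1} ∑_j |z_j a - z*_j|²`. -/
noncomputable def loss {n : ℕ} (z zs : Fin n → ℂ) : ℝ :=
  sInf {s : ℝ | ∃ a : ℂ, ‖a‖ = 1 ∧ s = ∑ j, ‖z j * a - zs j‖ ^ 2}

theorem stmt_6 (n : ℕ) (hn : 0 < n) (z zs : Fin n → ℂ)
    (hz : ∀ j, ‖z j‖ = 1) (hzs : ∀ j, ‖zs j‖ = 1) :
    ∑ j, ∑ k, ‖z j * (starRingEnd ℂ) (z k) - zs j * (starRingEnd ℂ) (zs k)‖ ^ 2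
      = loss z zs * (2 * n - loss z zs / 2) := by
  set w : ℂ := ∑ j, z j * (starRingEnd ℂ) (zs j) with hw
  have hnz : ∀ j, Complex.normSq (z j) = 1 := by
    intro j; rw [← Complex.sq_norm, hz j]; norm_num
  have hnzs : ∀ j, Complex.normSq (zs j) = 1 := by
    intro j; rw [← Complex.sq_norm, hzs j]; norm_num
  -- Step 1: for |a| = 1, the sum equals 2n - 2 Re(a w)
  have key : ∀ a : ℂ, ‖a‖ = 1 →
      (∑ j, ‖z j * a - zs j‖ ^ 2) = 2 * n - 2 * (a * w).re := by
    intro a ha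
    have hna : Complex.normSq a = 1 := by rw [← Complex.sq_norm, ha]; norm_num
    have : ∀ j, ‖z j * a - zs j‖ ^ 2
        = 2 - 2 * (a * (z j * (starRingEnd ℂ) (zs j))).re := by
      intro j
      rw [Complex.sq_norm, Complex.normSq_sub, Complex.normSq_mul, hnz j, hna, hnzs j]
      ring_nf
    simp only [this, Finset.sum_sub_distrib, Finset.sum_const, Finset.card_univ,
      Fintype.card_fin, nsmul_eq_mul, ← Finset.mul_sum, ← Complex.re_sum, ← Finset.mul_sum,
      hw]
    ring_nf
  have habsabs : ∀ u : ℂ, (u * (starRingEnd ℂ) u).re = ‖u‖ ^ 2 := by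
    intro u; rw [Complex.mul_conj, ← Complex.normSq_eq_norm_sq, Complex.ofReal_re]
  -- Step 2: loss = 2n - 2|w|
  have habsw : loss z zs = 2 * n - 2 * ‖w‖ := by
    unfold loss
    apply le_antisymm
    · apply csInf_le
      · refine ⟨2 * n - 2 * ‖w‖, ?_⟩
        rintro s ⟨a, ha, rfl⟩
        rw [key a ha]
        have : (a * w).re ≤ ‖w‖ := by
          calc (a * w).re ≤ ‖a * w‖ := Complex.re_le_norm _
            _ = ‖w‖ := by rw [norm_mul, ha, one_mul]
        linarith
      · by_cases hw0 : w = 0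
        · exact ⟨1, by simp, by rw [key 1 (by simp), hw0]; simp⟩
        · have habs1 : ‖(starRingEnd ℂ) w / (‖w‖ : ℂ)‖ = 1 := by
            rw [norm_div, Complex.norm_conj, Complex.norm_real, Real.norm_eq_abs,
              abs_of_nonneg (norm_nonneg w),
              div_self (norm_ne_zero_iff.mpr hw0)]
          refine ⟨(starRingEnd ℂ) w / (‖w‖ : ℂ), habs1, ?_⟩
          rw [key _ habs1]
          congr 1
          rw [div_mul_eq_mul_div]
          have h1 : (starRingEnd ℂ) w * w = ((‖w‖ ^ 2 : ℝ) : ℂ) := by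
            rw [mul_comm, Complex.mul_conj, Complex.normSq_eq_norm_sq]
          rw [h1, ← Complex.ofReal_div, Complex.ofReal_re, sq, mul_div_assoc,
            div_self (norm_ne_zero_iff.mpr hw0), mul_one]
    · apply le_csInf
      · exact ⟨2 * n - 2 * (1 * w).re, 1, by simp, by rw [key 1 (by simp)]⟩
      · rintro s ⟨a, ha, rfl⟩
        rw [key a ha]
        have : (a * w).re ≤ ‖w‖ := by
          calc (a * w).re ≤ ‖a * w‖ := Complex.re_le_norm _
            _ = ‖w‖ := by rw [norm_mul, ha, one_mul]
        linarith
  -- Step 3: LHS = 2n² - 2|w|²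
  have hterm : ∀ j k, ‖z j * (starRingEnd ℂ) (z k) - zs j * (starRingEnd ℂ) (zs k)‖ ^ 2
      = 2 - 2 * ((z j * (starRingEnd ℂ) (zs j)) * ((starRingEnd ℂ) (z k) * zs k)).re := by
    intro j k
    rw [Complex.sq_norm, Complex.normSq_sub, Complex.normSq_mul, Complex.normSq_mul,
      Complex.normSq_conj, Complex.normSq_conj, hnz j, hnz k, hnzs j, hnzs k]
    ring_nf
    congr 2
    rw [map_mul, Complex.conj_conj]
    ring
  have hconjw : (starRingEnd ℂ) w = ∑ k, (starRingEnd ℂ) (z k) * zs k := by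
    rw [hw, map_sum]
    congr 1; funext k; rw [map_mul, Complex.conj_conj]
  have hsum : (∑ j, ∑ k, ((z j * (starRingEnd ℂ) (zs j)) * ((starRingEnd ℂ) (z k) * zs k)))
      = w * (starRingEnd ℂ) w := by
    rw [hconjw, hw, Finset.sum_mul_sum]
  have hLHS : (∑ j, ∑ k,
      ‖z j * (starRingEnd ℂ) (z k) - zs j * (starRingEnd ℂ) (zs k)‖ ^ 2)
      = 2 * (n : ℝ) ^ 2 - 2 * ‖w‖ ^ 2 := by
    calc (∑ j, ∑ k,
        ‖z j * (starRingEnd ℂ) (z k) - zs j * (starRingEnd ℂ) (zs k)‖ ^ 2)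
        = ∑ j : Fin n, ∑ k : Fin n,
          (2 - 2 * ((z j * (starRingEnd ℂ) (zs j)) * ((starRingEnd ℂ) (z k) * zs k)).re) := by
          simp only [hterm]
      _ = 2 * (n : ℝ) ^ 2 - 2 * (∑ j, ∑ k,
          ((z j * (starRingEnd ℂ) (zs j)) * ((starRingEnd ℂ) (z k) * zs k))).re := by
          simp only [Finset.sum_sub_distrib, Finset.sum_const, Finset.card_univ,
            Fintype.card_fin, nsmul_eq_mul, ← Finset.mul_sum, ← Complex.re_sum]
          ring_nf
          congr 3
          apply Finset.sum_congr rfl; intro x _; ring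
      _ = 2 * (n : ℝ) ^ 2 - 2 * ‖w‖ ^ 2 := by rw [hsum, habsabs]
  rw [hLHS, habsw]
  ring
end

section
/- For any two vectors z, z* ∈ ℂⁿ with unit-modulus entries, the loss ℓ(z, z*) = min_{|a|=1} ∑_j |z_j a - z*_j|² satisfies the two-sided bound n·ℓ(z, z*) ≤ ‖z z^H - z* (z*)^H‖_F² ≤ 2n·ℓ(z, z*). -/
open Finset

lemma loss_eq {n : ℕ} (z zs : Fin n → ℂ)
    (hz : ∀ j, ‖z j‖ = 1) (hzs : ∀ j, ‖zs j‖ = 1) :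
    loss z zs = 2 * n - 2 * ‖∑ j, z j * (starRingEnd ℂ) (zs j)‖ := by
  set c := ∑ j, z j * (starRingEnd ℂ) (zs j) with hc
  have key : ∀ a : ℂ, ‖a‖ = 1 →
      ∑ j, ‖z j * a - zs j‖ ^ 2 = 2 * n - 2 * (a * c).re := by
    intro a ha
    have hterm : ∀ j, ‖z j * a - zs j‖ ^ 2
        = 2 - 2 * (a * (z j * (starRingEnd ℂ) (zs j))).re := by
      intro j
      rw [Complex.sq_norm, Complex.normSq_sub]
      have h1 : Complex.normSq (z j * a) = 1 := by
        rw [← Complex.sq_norm, norm_mul, hz, ha]; norm_num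
      have h2 : Complex.normSq (zs j) = 1 := by
        rw [← Complex.sq_norm, hzs]; norm_num
      rw [h1, h2, show z j * a * (starRingEnd ℂ) (zs j)
        = a * (z j * (starRingEnd ℂ) (zs j)) by ring]
      ring
    rw [Finset.sum_congr rfl fun j _ => hterm j, Finset.sum_sub_distrib,
      Finset.sum_const, hc, Finset.mul_sum]
    have : ∑ j, 2 * (a * (z j * (starRingEnd ℂ) (zs j))).re
        = 2 * (∑ j, a * (z j * (starRingEnd ℂ) (zs j))).re := by
      rw [Complex.re_sum, Finset.mul_sum]
    rw [this]
    simp [Finset.card_univ]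
    ring
  apply le_antisymm
  · -- sInf ≤ 2n - 2|c|
    apply csInf_le
    · refine ⟨2 * n - 2 * ‖c‖, ?_⟩
      rintro s ⟨a, ha, rfl⟩
      rw [key a ha]
      have : (a * c).re ≤ ‖c‖ := by
        calc (a * c).re ≤ ‖a * c‖ := Complex.re_le_norm _
          _ = ‖c‖ := by rw [norm_mul, ha, one_mul]
      linarith
    · by_cases hc0 : c = 0
      · exact ⟨1, by simp, by rw [key 1 (by simp)]; simp [hc0]⟩
      · refine ⟨(starRingEnd ℂ) c / (‖c‖ : ℂ), ?_, ?_⟩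
        · rw [norm_div, Complex.norm_conj, Complex.norm_real, Real.norm_eq_abs, abs_of_nonneg (norm_nonneg c),
            div_self (norm_ne_zero_iff.mpr hc0)]
        · rw [key _ (by
            rw [norm_div, Complex.norm_conj, Complex.norm_real, Real.norm_eq_abs,
              abs_of_nonneg (norm_nonneg c), div_self (norm_ne_zero_iff.mpr hc0)])]
          have habs : ((starRingEnd ℂ) c / (‖c‖ : ℂ)) * c = (‖c‖ : ℂ) := by
            rw [div_mul_eq_mul_div, mul_comm, Complex.mul_conj, Complex.normSq_eq_norm_sq]
            push_cast
            rw [sq, mul_div_assoc,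
              div_self (Complex.ofReal_ne_zero.mpr (norm_ne_zero_iff.mpr hc0)), mul_one]
          rw [habs]
          simp
  · -- 2n - 2|c| ≤ sInf
    apply le_csInf
    · exact ⟨_, 1, by simp, rfl⟩
    · rintro s ⟨a, ha, rfl⟩
      rw [key a ha]
      have : (a * c).re ≤ ‖c‖ := by
        calc (a * c).re ≤ ‖a * c‖ := Complex.re_le_norm _
          _ = ‖c‖ := by rw [norm_mul, ha, one_mul]
      linarith

theorem stmt_7 (n : ℕ) (hn : 0 < n) (z zs : Fin n → ℂ)
    (hz : ∀ j, ‖z j‖ = 1) (hzs : ∀ j, ‖zs j‖ = 1) :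
    (n : ℝ) * loss z zs
        ≤ ∑ j, ∑ k, ‖z j * (starRingEnd ℂ) (z k)
            - zs j * (starRingEnd ℂ) (zs k)‖ ^ 2 ∧
    ∑ j, ∑ k, ‖z j * (starRingEnd ℂ) (z k)
        - zs j * (starRingEnd ℂ) (zs k)‖ ^ 2 ≤ 2 * n * loss z zs := by
  set c := ∑ j, z j * (starRingEnd ℂ) (zs j) with hc
  set t : Fin n → ℂ := fun j => z j * (starRingEnd ℂ) (zs j) with ht
  have hF : ∑ j, ∑ k, ‖z j * (starRingEnd ℂ) (z k)
      - zs j * (starRingEnd ℂ) (zs k)‖ ^ 2 = 2 * (n:ℝ)^2 - 2 * ‖c‖ ^ 2 := by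
    have hterm : ∀ j k, ‖z j * (starRingEnd ℂ) (z k)
        - zs j * (starRingEnd ℂ) (zs k)‖ ^ 2
        = 2 - 2 * (t j * (starRingEnd ℂ) (t k)).re := by
      intro j k
      rw [Complex.sq_norm, Complex.normSq_sub]
      have h1 : Complex.normSq (z j * (starRingEnd ℂ) (z k)) = 1 := by
        rw [← Complex.sq_norm, norm_mul, Complex.norm_conj, hz, hz]; norm_num
      have h2 : Complex.normSq (zs j * (starRingEnd ℂ) (zs k)) = 1 := by
        rw [← Complex.sq_norm, norm_mul, Complex.norm_conj, hzs, hzs]; norm_num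
      have h3 : z j * (starRingEnd ℂ) (z k) * (starRingEnd ℂ) (zs j * (starRingEnd ℂ) (zs k))
          = t j * (starRingEnd ℂ) (t k) := by
        simp only [ht, map_mul, Complex.conj_conj]; ring
      rw [h1, h2, h3]; ring
    have inner : ∀ j, ∑ k, (2 - 2 * (t j * (starRingEnd ℂ) (t k)).re)
        = 2 * (n:ℝ) - 2 * (t j * (starRingEnd ℂ) c).re := by
      intro j
      rw [Finset.sum_sub_distrib, Finset.sum_const, Finset.card_univ]
      have : ∑ k, 2 * (t j * (starRingEnd ℂ) (t k)).re
          = 2 * (t j * (starRingEnd ℂ) c).re := by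
        rw [hc, map_sum, Finset.mul_sum, Complex.re_sum, Finset.mul_sum]
      rw [this, nsmul_eq_mul, Fintype.card_fin]; ring
    calc ∑ j, ∑ k, ‖z j * (starRingEnd ℂ) (z k)
          - zs j * (starRingEnd ℂ) (zs k)‖ ^ 2
        = ∑ j, (2 * (n:ℝ) - 2 * (t j * (starRingEnd ℂ) c).re) := by
          refine Finset.sum_congr rfl fun j _ => ?_
          rw [Finset.sum_congr rfl fun k _ => hterm j k, inner j]
      _ = 2 * (n:ℝ)^2 - 2 * ‖c‖ ^ 2 := by
          rw [Finset.sum_sub_distrib, Finset.sum_const, Finset.card_univ]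
          have h4 : ∑ j, 2 * (t j * (starRingEnd ℂ) c).re = 2 * ‖c‖ ^ 2 := by
            rw [← Finset.mul_sum, ← Complex.re_sum, ← Finset.sum_mul,
              show (∑ j, t j) = c from rfl, Complex.mul_conj, Complex.sq_norm]
            simp
          rw [h4, nsmul_eq_mul, Fintype.card_fin]; ring
  have hcn : ‖c‖ ≤ (n : ℝ) := by
    calc ‖c‖ ≤ ∑ j, ‖t j‖ := by
          rw [hc]; exact norm_sum_le _ _
      _ = (n : ℝ) := by
          simp only [ht, norm_mul, Complex.norm_conj, hz, hzs]
          simp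
  have hL := loss_eq z zs hz hzs
  rw [hF, hL, ← hc]
  have hc0 : 0 ≤ ‖c‖ := norm_nonneg c
  constructor
  · nlinarith
  · nlinarith
end

section
/- Let z⁰, ẑ, z* ∈ ℂⁿ all have unit-modulus entries and suppose that for all pairs j ≠ k, z⁰_j conj(z⁰_k) = (ẑ_j conj(ẑ_k)) / |ẑ_j conj(ẑ_k)| whenever ẑ_j conj(ẑ_k) ≠ 0. Then ‖z⁰ (z⁰)^H - z* (z*)^H‖_F ≤ 2 ‖ẑ ẑ^H - z* (z*)^H‖_F. -/
lemma key_16 (w y : ℂ) (hw : w ≠ 0) (hy : ‖y‖ = 1) :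
    ‖w / (‖w‖ : ℂ) - y‖ ≤ 2 * ‖w - y‖ := by
  have hwa : ‖w‖ ≠ 0 := by simpa using hw
  have h1 : ‖w / (‖w‖ : ℂ) - w‖ = |1 - ‖w‖| := by
    have : w / (‖w‖ : ℂ) - w = w * ((1 - (‖w‖ : ℂ)) / (‖w‖ : ℂ)) := by
      have hwc : ((‖w‖ : ℝ) : ℂ) ≠ 0 := by
        simpa using hwa
      field_simp
    rw [this, norm_mul, norm_div]
    rw [show ((1 : ℂ) - (‖w‖ : ℂ)) = ((1 - ‖w‖ : ℝ) : ℂ) by push_cast; ring]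
    rw [Complex.norm_real, Complex.norm_real, Real.norm_eq_abs, Real.norm_eq_abs, abs_of_nonneg (norm_nonneg w)]
    field_simp
  have h2 : |1 - ‖w‖| ≤ ‖w - y‖ := by
    have := abs_norm_sub_norm_le w y
    rw [hy] at this
    calc |1 - ‖w‖| = |‖w‖ - 1| := abs_sub_comm _ _
      _ ≤ ‖w - y‖ := this
  calc ‖w / (‖w‖ : ℂ) - y‖
      ≤ ‖w / (‖w‖ : ℂ) - w‖ + ‖w - y‖ :=
        norm_sub_le_norm_sub_add_norm_sub _ _ _
    _ ≤ ‖w - y‖ + ‖w - y‖ := by rw [h1]; linarith [h2]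
    _ = 2 * ‖w - y‖ := by ring

open Finset in
theorem stmt_16 (n : ℕ) (hn : 0 < n) (z0 zh zs : Fin n → ℂ)
    (hz0 : ∀ j, ‖z0 j‖ = 1) (hzs : ∀ j, ‖zs j‖ = 1)
    (hzh : ∀ j, zh j ≠ 0)
    (hnorm : ∀ j k, j ≠ k → zh j * (starRingEnd ℂ) (zh k) ≠ 0 →
      z0 j * (starRingEnd ℂ) (z0 k)
        = zh j * (starRingEnd ℂ) (zh k) / (‖zh j * (starRingEnd ℂ) (zh k)‖ : ℂ)) :
    Real.sqrt (∑ j, ∑ k,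
        ‖z0 j * (starRingEnd ℂ) (z0 k) - zs j * (starRingEnd ℂ) (zs k)‖ ^ 2)
      ≤ 2 * Real.sqrt (∑ j, ∑ k,
        ‖zh j * (starRingEnd ℂ) (zh k) - zs j * (starRingEnd ℂ) (zs k)‖ ^ 2) := by
  have hpt : ∀ j k, ‖z0 j * (starRingEnd ℂ) (z0 k) - zs j * (starRingEnd ℂ) (zs k)‖
      ≤ 2 * ‖zh j * (starRingEnd ℂ) (zh k) - zs j * (starRingEnd ℂ) (zs k)‖ := by
    intro j k
    by_cases hjk : j = k
    · subst hjk
      have e0 : z0 j * (starRingEnd ℂ) (z0 j) = 1 := by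
        rw [Complex.mul_conj, ← Complex.sq_norm, hz0]; norm_num
      have es : zs j * (starRingEnd ℂ) (zs j) = 1 := by
        rw [Complex.mul_conj, ← Complex.sq_norm, hzs]; norm_num
      rw [e0, es]; simp
    · have hw : zh j * (starRingEnd ℂ) (zh k) ≠ 0 :=
        mul_ne_zero (hzh j) (by simpa using hzh k)
      have hy : ‖zs j * (starRingEnd ℂ) (zs k)‖ = 1 := by
        rw [norm_mul, Complex.norm_conj, hzs, hzs]; norm_num
      rw [hnorm j k hjk hw]
      exact key_16 _ _ hw hy
  have hsum : (∑ j, ∑ k,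
        ‖z0 j * (starRingEnd ℂ) (z0 k) - zs j * (starRingEnd ℂ) (zs k)‖ ^ 2)
      ≤ 4 * ∑ j, ∑ k,
        ‖zh j * (starRingEnd ℂ) (zh k) - zs j * (starRingEnd ℂ) (zs k)‖ ^ 2 := by
    rw [Finset.mul_sum]
    refine Finset.sum_le_sum fun j _ => ?_
    rw [Finset.mul_sum]
    refine Finset.sum_le_sum fun k _ => ?_
    have h := hpt j k
    nlinarith [norm_nonneg (z0 j * (starRingEnd ℂ) (z0 k) - zs j * (starRingEnd ℂ) (zs k)),
      norm_nonneg (zh j * (starRingEnd ℂ) (zh k) - zs j * (starRingEnd ℂ) (zs k))]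
  calc Real.sqrt (∑ j, ∑ k,
        ‖z0 j * (starRingEnd ℂ) (z0 k) - zs j * (starRingEnd ℂ) (zs k)‖ ^ 2)
      ≤ Real.sqrt (4 * ∑ j, ∑ k,
        ‖zh j * (starRingEnd ℂ) (zh k) - zs j * (starRingEnd ℂ) (zs k)‖ ^ 2) :=
        Real.sqrt_le_sqrt hsum
    _ = 2 * Real.sqrt (∑ j, ∑ k,
        ‖zh j * (starRingEnd ℂ) (zh k) - zs j * (starRingEnd ℂ) (zs k)‖ ^ 2) := by
        rw [Real.sqrt_mul (by norm_num), show (4:ℝ) = 2^2 by norm_num,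
          Real.sqrt_sq (by norm_num)]
end

section
/- Fix a symmetric 0/1 array A on [n]×[n] with zero diagonal such that ∑_{k≠j} A_{jk} > 0 for every j, a Hermitian matrix Y ∈ ℂ^{n×n}, and define the map f : ℂ₁ⁿ → ℂ₁ⁿ whose j-th coordinate is (∑_{k≠j} A_{jk} Y_{jk} z_k)/|∑_{k≠j} A_{jk} Y_{jk} z_k| when the numerator is nonzero and 1 otherwise, where ℂ₁ⁿ is the set of vectors with unit-modulus entries. Then any ẑ ∈ ℂ₁ⁿ maximizing z ↦ ∑_{j,k} conj(z_j) A_{jk} Y_{jk} z_k over ℂ₁ⁿ, and such that ∑_{k≠j} A_{jk} Y_{jk} ẑ_k ≠ 0 for all j, is a fixed point: f(ẑ) = ẑ. -/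
open Finset

/-- The generalized power method map: entrywise normalization of `(A ∘ Y) z`. -/
noncomputable def gpmMap {n : ℕ} (A : Fin n → Fin n → ℝ) (Y : Fin n → Fin n → ℂ)
    (z : Fin n → ℂ) : Fin n → ℂ := fun j =>
  let w := ∑ k ∈ univ.erase j, (A j k : ℂ) * Y j k * z k
  if w ≠ 0 then w / (‖w‖ : ℂ) else 1

theorem stmt_19 (n : ℕ) (hn : 0 < n)
    (A : Fin n → Fin n → ℝ)
    (hA01 : ∀ j k, A j k = 0 ∨ A j k = 1)
    (hAsymm : ∀ j k, A k j = A j k) (hAdiag : ∀ j, A j j = 0)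
    (hAdeg : ∀ j, 0 < ∑ k ∈ univ.erase j, A j k)
    (Y : Fin n → Fin n → ℂ) (hY : ∀ j k, Y k j = (starRingEnd ℂ) (Y j k))
    (zh : Fin n → ℂ) (hzh : ∀ j, ‖zh j‖ = 1)
    (hmax : ∀ z : Fin n → ℂ, (∀ j, ‖z j‖ = 1) →
      (∑ j, ∑ k, (starRingEnd ℂ) (z j) * (A j k : ℂ) * Y j k * z k).re
        ≤ (∑ j, ∑ k, (starRingEnd ℂ) (zh j) * (A j k : ℂ) * Y j k * zh k).re)
    (hnz : ∀ j, ∑ k ∈ univ.erase j, (A j k : ℂ) * Y j k * zh k ≠ 0) :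
    gpmMap A Y zh = zh := by
  funext j
  set w : ℂ := ∑ k ∈ univ.erase j, (A j k : ℂ) * Y j k * zh k with hw
  have hwne : w ≠ 0 := hnz j
  have habs : ‖w‖ ≠ 0 := by simpa using hwne
  set C : ℂ := ∑ x ∈ univ.erase j, ∑ k ∈ univ.erase j,
      (starRingEnd ℂ) (zh x) * (A x k : ℂ) * Y x k * zh k with hC
  -- conj w
  have hconjw : (starRingEnd ℂ) w = ∑ k ∈ univ.erase j,
      (A k j : ℂ) * Y k j * (starRingEnd ℂ) (zh k) := by
    rw [hw, map_sum]
    refine Finset.sum_congr rfl fun k hk => ?_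
    rw [map_mul, map_mul, hAsymm j k, hY j k]
    simp [Complex.conj_ofReal]
  have hS : ∀ z : Fin n → ℂ, (∀ k, k ≠ j → z k = zh k) →
      ∑ x, ∑ k, (starRingEnd ℂ) (z x) * (A x k : ℂ) * Y x k * z k
        = C + ((starRingEnd ℂ) (z j) * w + z j * (starRingEnd ℂ) w) := by
    intro z hz
    have hzk : ∀ k ∈ univ.erase j, z k = zh k := fun k hk =>
      hz k (Finset.ne_of_mem_erase hk)
    have hinner : ∀ x : Fin n,
        ∑ k, (starRingEnd ℂ) (z x) * (A x k : ℂ) * Y x k * z k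
          = (∑ k ∈ univ.erase j, (starRingEnd ℂ) (z x) * (A x k : ℂ) * Y x k * z k)
            + (starRingEnd ℂ) (z x) * (A x j : ℂ) * Y x j * z j := fun x =>
      (Finset.sum_erase_add univ _ (mem_univ j)).symm
    calc ∑ x, ∑ k, (starRingEnd ℂ) (z x) * (A x k : ℂ) * Y x k * z k
        = (∑ x ∈ univ.erase j, ∑ k, (starRingEnd ℂ) (z x) * (A x k : ℂ) * Y x k * z k)
          + ∑ k, (starRingEnd ℂ) (z j) * (A j k : ℂ) * Y j k * z k :=
          (Finset.sum_erase_add univ _ (mem_univ j)).symm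
      _ = (C + z j * (starRingEnd ℂ) w) + (starRingEnd ℂ) (z j) * w := by
          congr 1
          · -- off-diagonal rows
            have hrow : ∀ x ∈ univ.erase j,
                ∑ k, (starRingEnd ℂ) (z x) * (A x k : ℂ) * Y x k * z k
                  = (∑ k ∈ univ.erase j,
                      (starRingEnd ℂ) (zh x) * (A x k : ℂ) * Y x k * zh k)
                    + (A x j : ℂ) * Y x j * (starRingEnd ℂ) (zh x) * z j := by
              intro x hx
              rw [hinner x, hzk x hx]
              congr 1
              · exact Finset.sum_congr rfl fun k hk => by rw [hzk k hk]
              · ring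
            rw [Finset.sum_congr rfl hrow, Finset.sum_add_distrib, hconjw,
              Finset.mul_sum]
            congr 1
            exact Finset.sum_congr rfl fun x _ => by ring
          · -- row j
            rw [hinner j, hAdiag]
            simp only [Complex.ofReal_zero, mul_zero, zero_mul, add_zero]
            rw [hw, Finset.mul_sum]
            exact Finset.sum_congr rfl fun k hk => by rw [hzk k hk]; ring
      _ = C + ((starRingEnd ℂ) (z j) * w + z j * (starRingEnd ℂ) w) := by ring
  -- the comparison vector
  set u : ℂ := w / (‖w‖ : ℂ) with hu
  have huabs : ‖u‖ = 1 := by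
    rw [hu, norm_div, Complex.norm_real, norm_norm,
      div_self habs]
  set z : Fin n → ℂ := Function.update zh j u with hz
  have hz1 : ∀ k, ‖z k‖ = 1 := by
    intro k
    rw [hz]
    by_cases hk : k = j
    · subst hk; rw [Function.update_self]; exact huabs
    · rw [Function.update_of_ne hk]; exact hzh k
  have hzoff : ∀ k, k ≠ j → z k = zh k := fun k hk => Function.update_of_ne hk _ _
  have hzj : z j = u := Function.update_self _ _ _
  have key := hmax z hz1
  rw [hS z hzoff, hS zh (fun _ _ => rfl), hzj] at key
  -- simplify conj u * w
  have hcu : (starRingEnd ℂ) u * w = (‖w‖ : ℂ) := by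
    rw [hu, map_div₀, Complex.conj_ofReal, div_mul_eq_mul_div, mul_comm,
      Complex.mul_conj, Complex.normSq_eq_norm_sq]
    push_cast
    rw [sq, mul_div_assoc, div_self (Complex.ofReal_ne_zero.mpr habs), mul_one]
  have hcu2 : u * (starRingEnd ℂ) w = (‖w‖ : ℂ) := by
    have h := congrArg (starRingEnd ℂ) hcu
    rw [map_mul, Complex.conj_conj, Complex.conj_ofReal] at h
    exact h
  rw [hcu, hcu2] at key
  -- let c = conj (zh j) * w
  set c : ℂ := (starRingEnd ℂ) (zh j) * w with hc
  have hconjc : zh j * (starRingEnd ℂ) w = (starRingEnd ℂ) c := by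
    rw [hc, map_mul, Complex.conj_conj]
  rw [hconjc] at key
  have hge : ‖w‖ ≤ c.re := by
    simp only [Complex.add_re, Complex.ofReal_re, Complex.conj_re] at key
    linarith
  have habsc : ‖c‖ = ‖w‖ := by
    rw [hc, norm_mul, Complex.norm_conj, hzh j, one_mul]
  have hre : c.re = ‖w‖ := le_antisymm (habsc ▸ Complex.re_le_norm c) hge
  have him : c.im = 0 := by
    have h2 : ‖c‖ ^ 2 = c.re ^ 2 + c.im ^ 2 := by
      rw [Complex.sq_norm, Complex.normSq_apply]; ring
    have h3 : c.im ^ 2 = 0 := by rw [habsc, hre] at h2; linarith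
    exact pow_eq_zero_iff (by norm_num) |>.mp h3
  have hceq : c = (‖w‖ : ℂ) := Complex.ext (by simp [hre]) (by simp [him])
  have hwz : w = zh j * (‖w‖ : ℂ) := by
    have h := congrArg (zh j * ·) hceq
    simp only [hc, ← mul_assoc] at h
    rw [Complex.mul_conj, Complex.normSq_eq_norm_sq, hzh j] at h
    simpa using h
  have hgj : gpmMap A Y zh j = if w ≠ 0 then w / (‖w‖ : ℂ) else 1 := rfl
  rw [hgj, if_pos hwne, div_eq_iff (Complex.ofReal_ne_zero.mpr habs)]
  exact hwz
end
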